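/- The diagonal Δ = {(x,x) : x ∈ [0,1]} does not belong to the product σ-algebra 𝒫([0,1]) ⊗ 𝒞, where 𝒫([0,1]) is the power set of [0,1] and 𝒞 is the σ-algebra of countable and co-countable subsets of [0,1]. -/
import Mathlib


open MeasureTheory

/-- Section of a set in the square at second coordinate `y`. -/
def Sec9 (M : Set (unitInterval × unitInterval)) (y : unitInterval) : Set unitInterval :=
  {x | (x, y) ∈ M}

/-- A set is "good" if outside a countable set of `y`'s all its sections agree. -/
def Good9 (M : Set (unitInterval × unitInterval)) : Prop :=
  ∃ D : Set unitInterval, D.Countable ∧ ∀ y₁ ∉ D, ∀ y₂ ∉ D, Sec9 M y₁ = Sec9 M y₂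

def mD9 : MeasurableSpace (unitInterval × unitInterval) where
  MeasurableSet' := Good9
  measurableSet_empty := ⟨∅, Set.countable_empty, fun _ _ _ _ => rfl⟩
  measurableSet_compl := by
    rintro M ⟨D, hDc, hD⟩
    refine ⟨D, hDc, fun y₁ h₁ y₂ h₂ => ?_⟩
    have := hD y₁ h₁ y₂ h₂
    ext x
    simp only [Sec9, Set.mem_setOf_eq, Set.mem_compl_iff]
    rw [show ((x, y₁) ∈ M ↔ (x, y₂) ∈ M) from Set.ext_iff.mp this x]
  measurableSet_iUnion := by
    intro f hf
    choose D hDc hD using hf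
    refine ⟨⋃ n, D n, Set.countable_iUnion hDc, fun y₁ h₁ y₂ h₂ => ?_⟩
    ext x
    simp only [Sec9, Set.mem_setOf_eq, Set.mem_iUnion]
    constructor <;> rintro ⟨n, hn⟩ <;> refine ⟨n, ?_⟩
    · exact (Set.ext_iff.mp (hD n y₁ (fun h => h₁ (Set.mem_iUnion.2 ⟨n, h⟩))
        y₂ (fun h => h₂ (Set.mem_iUnion.2 ⟨n, h⟩))) x).mp hn
    · exact (Set.ext_iff.mp (hD n y₁ (fun h => h₁ (Set.mem_iUnion.2 ⟨n, h⟩))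
        y₂ (fun h => h₂ (Set.mem_iUnion.2 ⟨n, h⟩))) x).mpr hn

theorem stmt_9
    (mC : MeasurableSpace unitInterval)
    (hmC : mC = MeasurableSpace.generateFrom {S | S.Countable ∨ Sᶜ.Countable}) :
    ¬ MeasurableSet[MeasurableSpace.prod ⊤ mC]
        {p : unitInterval × unitInterval | p.1 = p.2} := by
  intro hmeas
  have hle : MeasurableSpace.prod ⊤ mC ≤ mD9 := by
    rw [MeasurableSpace.prod]
    apply sup_le
    · rintro s ⟨A, -, rfl⟩
      exact ⟨∅, Set.countable_empty, fun _ _ _ _ => rfl⟩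
    · rw [hmC, MeasurableSpace.comap_generateFrom]
      apply MeasurableSpace.generateFrom_le
      rintro s ⟨C, (hC | hC), rfl⟩
      · refine ⟨C, hC, fun y₁ h₁ y₂ h₂ => ?_⟩
        ext x
        simp only [Sec9, Set.mem_setOf_eq, Set.mem_preimage]
        exact ⟨fun h => absurd h h₁, fun h => absurd h h₂⟩
      · refine ⟨Cᶜ, hC, fun y₁ h₁ y₂ h₂ => ?_⟩
        ext x
        simp only [Sec9, Set.mem_setOf_eq, Set.mem_preimage]
        exact ⟨fun _ => not_not.mp h₂, fun _ => not_not.mp h₁⟩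
  obtain ⟨D, hDc, hD⟩ := hle _ hmeas
  have huniv : ¬ (Set.univ : Set unitInterval).Countable := by
    have h : Cardinal.mk unitInterval = Cardinal.continuum := by
      simpa [unitInterval] using Cardinal.mk_Icc_real (by norm_num : (0:ℝ) < 1)
    rw [Set.countable_univ_iff]
    intro hc
    have := Cardinal.mk_le_aleph0_iff.mpr hc
    rw [h] at this
    exact absurd this (not_le.mpr Cardinal.aleph0_lt_continuum)
  have hDcompl : ¬ Dᶜ.Countable := fun h =>
    huniv (by simpa using hDc.union h)
  have hinf : Dᶜ.Infinite := fun hfin => hDcompl hfin.countable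
  obtain ⟨y₁, h₁, y₂, h₂, hne⟩ := hinf.nontrivial
  have := hD y₁ h₁ y₂ h₂
  have hy : y₁ ∈ Sec9 {p : unitInterval × unitInterval | p.1 = p.2} y₁ := rfl
  rw [this] at hy
  exact hne hy
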